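/- For the implicit midpoint rule with m-1 correction stages applied to a Lipschitz ODE, the difference over one step between the corrected mixed-precision scheme and the fully high-precision scheme satisfies |u^{n+1}_{mixed} - u^{n+1}_{full}| ≤ (L Δt/2)^{m} · Δt · (Lip constant factor) · |initial stage perturbation|, i.e., each correction multiplies the one-step perturbation error by a factor of at most LΔt/2. -/
import Mathlib


/-- Each explicit correction stage of the implicit midpoint rule multiplies the
one-step perturbation error by a factor of at most `LΔt/2`: for an `L`-Lipschitz `F`,
`|y^{(1)}_{[k],mixed} - y^{(1)}_{[k],full}| ≤ (LΔt/2)^k δ` for all `k`, and the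
one-step difference between the mixed scheme with `m-1` corrections and the full
scheme is `≤ L Δt (LΔt/2)^{m-1} δ`, where `δ` is the initial stage perturbation. -/
theorem IMR_corrections_damp_perturbation
    {d : ℕ} (F Feps : (Fin d → ℝ) → (Fin d → ℝ)) (L dt : ℝ)
    (hL : 0 ≤ L) (hdt : 0 ≤ dt)
    (hLip : ∀ x y : Fin d → ℝ, ‖F x - F y‖ ≤ L * ‖x - y‖)
    (u : Fin d → ℝ) (ymix yfull : ℕ → Fin d → ℝ) (m : ℕ) (hm : 1 ≤ m)
    (hmix0 : ymix 0 = u + (dt / 2) • Feps (ymix 0))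
    (hfull0 : yfull 0 = u + (dt / 2) • F (yfull 0))
    (hmix : ∀ k, ymix (k + 1) = u + (dt / 2) • F (ymix k))
    (hfull : ∀ k, yfull (k + 1) = u + (dt / 2) • F (yfull k)) :
    (∀ k, ‖ymix k - yfull k‖ ≤ (L * dt / 2) ^ k * ‖ymix 0 - yfull 0‖) ∧
    ‖(u + dt • F (ymix (m - 1))) - (u + dt • F (yfull (m - 1)))‖ ≤
      L * dt * (L * dt / 2) ^ (m - 1) * ‖ymix 0 - yfull 0‖ := by
  have key : ∀ k, ‖ymix k - yfull k‖ ≤ (L * dt / 2) ^ k * ‖ymix 0 - yfull 0‖ := by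
    intro k
    induction k with
    | zero => simp
    | succ k ih =>
      have h1 : ymix (k + 1) - yfull (k + 1) = (dt / 2) • (F (ymix k) - F (yfull k)) := by
        rw [hmix k, hfull k, smul_sub]; abel
      calc ‖ymix (k + 1) - yfull (k + 1)‖
          = |dt / 2| * ‖F (ymix k) - F (yfull k)‖ := by
            rw [h1, norm_smul, Real.norm_eq_abs]
        _ ≤ (dt / 2) * (L * ‖ymix k - yfull k‖) := by
            rw [abs_of_nonneg (by linarith)]
            exact mul_le_mul_of_nonneg_left (hLip _ _) (by linarith)
        _ ≤ (dt / 2) * (L * ((L * dt / 2) ^ k * ‖ymix 0 - yfull 0‖)) := by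
            have := mul_le_mul_of_nonneg_left ih hL
            exact mul_le_mul_of_nonneg_left this (by linarith)
        _ = (L * dt / 2) ^ (k + 1) * ‖ymix 0 - yfull 0‖ := by ring
  refine ⟨key, ?_⟩
  have h2 : (u + dt • F (ymix (m - 1))) - (u + dt • F (yfull (m - 1)))
      = dt • (F (ymix (m - 1)) - F (yfull (m - 1))) := by
    rw [smul_sub]; abel
  calc ‖(u + dt • F (ymix (m - 1))) - (u + dt • F (yfull (m - 1)))‖
      = |dt| * ‖F (ymix (m - 1)) - F (yfull (m - 1))‖ := by
        rw [h2, norm_smul, Real.norm_eq_abs]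
    _ ≤ dt * (L * ‖ymix (m - 1) - yfull (m - 1)‖) := by
        rw [abs_of_nonneg hdt]
        exact mul_le_mul_of_nonneg_left (hLip _ _) hdt
    _ ≤ dt * (L * ((L * dt / 2) ^ (m - 1) * ‖ymix 0 - yfull 0‖)) := by
        have := mul_le_mul_of_nonneg_left (key (m - 1)) hL
        exact mul_le_mul_of_nonneg_left this hdt
    _ = L * dt * (L * dt / 2) ^ (m - 1) * ‖ymix 0 - yfull 0‖ := by ring
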